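/- Let G be a connected Eulerian digraph, x, y chip-distributions, and f ∈ ℕ^V a nonzero vector with y = x + Lf and min_v f(v) = 0. Let t = max_v f(v), for 1 ≤ j ≤ t let S_j = {v ∈ V : f(v) ≥ t − j + 1}, and for 1 ≤ j ≤ t+1 let x_j = x + L·∑_{ℓ=1}^{j−1} 1_{S_ℓ} (so x_1 = x and x_{t+1} = y). Then x ⤳ y if and only if for every index j ∈ {1, …, t} with j = t or S_j ≠ S_{j+1} (the last occurrence of each distinct set in the chain S_1 ⊆ … ⊆ S_t), the vector x_j is a chip-distribution (nonnegative) and there is a legal game from x_j to x_{j+1}. -/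

import Mathlib

namespace ChipFiring

variable {V : Type*}

/-- Out-degree of a vertex: total multiplicity of edges leaving `v`. -/
def outdeg [Fintype V] (d : V → V → ℕ) (v : V) : ℕ := ∑ u, d v u

/-- In-degree of a vertex: total multiplicity of edges entering `v`. -/
def indeg [Fintype V] (d : V → V → ℕ) (v : V) : ℕ := ∑ u, d u v

/-- A digraph (multiplicity function) has no loops. -/
def Loopless (d : V → V → ℕ) : Prop := ∀ v, d v v = 0

/-- Weak connectivity: each pair of vertices is joined by an undirected walk. -/
def WeaklyConnected (d : V → V → ℕ) : Prop :=
  ∀ u v : V, Relation.ReflTransGen (fun a b => d a b ≠ 0 ∨ d b a ≠ 0) u v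

/-- Strong connectivity: each ordered pair of vertices is joined by a directed walk. -/
def StronglyConnected (d : V → V → ℕ) : Prop :=
  ∀ u v : V, Relation.ReflTransGen (fun a b => d a b ≠ 0) u v

/-- Eulerian: out-degree equals in-degree at each vertex. -/
def Eulerian [Fintype V] (d : V → V → ℕ) : Prop := ∀ v, outdeg d v = indeg d v

/-- The Laplacian matrix: `L(u,u) = -d⁺(u)`, and `L(u,v) = d(v,u)` for `u ≠ v`. -/
def laplacian [Fintype V] [DecidableEq V] (d : V → V → ℕ) : Matrix V V ℤ :=
  fun u v => if u = v then -(outdeg d v : ℤ) else (d v u : ℤ)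

/-- Firing vertex `v`: `v` sends one chip along each outgoing edge. -/
def fire [Fintype V] [DecidableEq V] (d : V → V → ℕ) (x : V → ℕ) (v : V) : V → ℕ :=
  fun u => if u = v then x v - outdeg d v else x u + d v u

/-- `LegalSeq d x α` : the sequence of firings `α` is legal from initial distribution `x`. -/
def LegalSeq [Fintype V] [DecidableEq V] (d : V → V → ℕ) : (V → ℕ) → List V → Prop
  | _, [] => True
  | x, v :: rest => outdeg d v ≤ x v ∧ LegalSeq d (fire d x v) rest

/-- The chip-distribution obtained from `x` after performing the firings `α`. -/
def runGame [Fintype V] [DecidableEq V] (d : V → V → ℕ) : (V → ℕ) → List V → (V → ℕ)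
  | x, [] => x
  | x, v :: rest => runGame d (fire d x v) rest

/-- The firing vector of a game: how many times each vertex is fired. -/
def firingVector [DecidableEq V] (α : List V) : V → ℕ := fun v => α.count v

/-- `x ⤳ y` : some legal game transforms `x` into `y`. -/
def Reaches [Fintype V] [DecidableEq V] (d : V → V → ℕ) (x y : V → ℕ) : Prop :=
  ∃ α : List V, LegalSeq d x α ∧ runGame d x α = y

/-- A period vector: a nonnegative integer vector in the kernel of the Laplacian. -/
def PeriodVector [Fintype V] [DecidableEq V] (d : V → V → ℕ) (p : V → ℕ) : Prop :=
  (laplacian d).mulVec (fun v => (p v : ℤ)) = 0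

/-- A vector `f ∈ ℕ^V` is reduced if `f ≥ p` fails for every nonzero period vector `p`. -/
def Reduced [Fintype V] [DecidableEq V] (d : V → V → ℕ) (f : V → ℕ) : Prop :=
  ∀ p : V → ℕ, PeriodVector d p → p ≠ 0 → ¬ (∀ v, p v ≤ f v)

/-- A distribution is recurrent if a nonempty legal game transforms it back to itself. -/
def Recurrent [Fintype V] [DecidableEq V] (d : V → V → ℕ) (x : V → ℕ) : Prop :=
  ∃ α : List V, α ≠ [] ∧ LegalSeq d x α ∧ runGame d x α = x

/-- Linear equivalence: `x = y + Lz` for some integer vector `z`. -/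
def LinEquiv [Fintype V] [DecidableEq V] (d : V → V → ℕ) (x y : V → ℕ) : Prop :=
  ∃ z : V → ℤ, ∀ v, (x v : ℤ) = (y v : ℤ) + (laplacian d).mulVec z v

/-- `x` is non-terminating: there is an infinite sequence of legal firings from `x`. -/
def NonTerminating [Fintype V] [DecidableEq V] (d : V → V → ℕ) (x : V → ℕ) : Prop :=
  ∃ s : ℕ → V, ∀ n : ℕ, LegalSeq d x (List.ofFn (fun i : Fin n => s i))

end ChipFiring

namespace ChipFiring

set_option linter.unusedSectionVars false

section Aux
variable {V : Type*} [Fintype V] [DecidableEq V]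

/-- Our own count function for lists. -/
def cnt : List V → V → ℕ
  | [], _ => 0
  | w :: rest, u => (if u = w then 1 else 0) + cnt rest u

@[simp] lemma cnt_nil (u : V) : cnt ([] : List V) u = 0 := rfl

@[simp] lemma cnt_cons (w : V) (rest : List V) (u : V) :
    cnt (w :: rest) u = (if u = w then 1 else 0) + cnt rest u := rfl

lemma cnt_append (α β : List V) (u : V) : cnt (α ++ β) u = cnt α u + cnt β u := by
  induction α with
  | nil => simp
  | cons w rest ih => simp [ih]; omega

lemma mem_of_cnt_pos : ∀ {α : List V} {u : V}, 0 < cnt α u → u ∈ α := by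
  intro α
  induction α with
  | nil => intro u h; simp at h
  | cons w rest ih =>
    intro u h
    by_cases hu : u = w
    · simp [hu]
    · simp [cnt_cons, hu] at h
      exact List.mem_cons_of_mem _ (ih h)

lemma cnt_pos_of_mem : ∀ {α : List V} {u : V}, u ∈ α → 0 < cnt α u := by
  intro α
  induction α with
  | nil => intro u h; cases h
  | cons w rest ih =>
    intro u h
    rcases List.mem_cons.mp h with h | h
    · simp [h]
    · have := ih h; simp; omega

/-- Delete the first occurrence of `u`. -/
def del (u : V) : List V → List V
  | [] => []
  | w :: rest => if w = u then rest else w :: del u rest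

lemma cnt_del (u : V) : ∀ (α : List V), u ∈ α → ∀ v,
    cnt (del u α) v + (if v = u then 1 else 0) = cnt α v := by
  intro α
  induction α with
  | nil => intro h; cases h
  | cons w rest ih =>
    intro hu v
    by_cases hwu : w = u
    · subst hwu
      simp only [del, cnt_cons, eq_self_iff_true, if_true]
      omega
    · have hu' : u ∈ rest := by
        rcases List.mem_cons.mp hu with h | h
        · exact absurd h.symm hwu
        · exact h
      simp only [del, if_neg hwu, cnt_cons]
      have := ih hu' v
      omega

/-- The Laplacian action as an explicit sum. -/
def lap (d : V → V → ℕ) (g : V → ℤ) (v : V) : ℤ := ∑ u, laplacian d v u * g u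

lemma lap_eq_mulVec (d : V → V → ℕ) (g : V → ℤ) (v : V) :
    (laplacian d).mulVec g v = lap d g v := rfl

lemma lap_congr (d : V → V → ℕ) {g h : V → ℤ} (hgh : ∀ u, g u = h u) (v : V) :
    lap d g v = lap d h v := by
  unfold lap; exact Finset.sum_congr rfl (fun u _ => by rw [hgh u])

lemma lap_add (d : V → V → ℕ) (g h : V → ℤ) (v : V) :
    lap d (fun u => g u + h u) v = lap d g v + lap d h v := by
  unfold lap; simp [mul_add, Finset.sum_add_distrib]

lemma lap_sub (d : V → V → ℕ) (g h : V → ℤ) (v : V) :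
    lap d (fun u => g u - h u) v = lap d g v - lap d h v := by
  unfold lap; simp [mul_sub, Finset.sum_sub_distrib]

@[simp] lemma lap_zero (d : V → V → ℕ) (v : V) : lap d (fun _ => (0:ℤ)) v = 0 := by
  simp [lap]

lemma fire_other {d : V → V → ℕ} {x : V → ℕ} {u v : V} (h : u ≠ v) :
    fire d x v u = x u + d v u := by
  simp [fire, h]

lemma fire_self {d : V → V → ℕ} {x : V → ℕ} (v : V) :
    fire d x v v = x v - outdeg d v := by
  simp [fire]

lemma fire_int {d : V → V → ℕ} {x : V → ℕ} {w : V} (h : outdeg d w ≤ x w) (v : V) :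
    (fire d x w v : ℤ) = (x v : ℤ) + lap d (fun u => if u = w then 1 else 0) v := by
  have hl : lap d (fun u => if u = w then (1:ℤ) else 0) v = laplacian d v w := by
    unfold lap
    rw [Finset.sum_eq_single w]
    · simp
    · intro u _ hu; simp [hu]
    · intro h; exact absurd (Finset.mem_univ w) h
  rw [hl]
  by_cases hv : v = w
  · subst hv
    rw [fire_self]
    unfold laplacian
    simp only [if_pos rfl]
    push_cast [h]
    ring
  · rw [fire_other hv]
    unfold laplacian
    rw [if_neg hv]
    push_cast
    ring

lemma runGame_int {d : V → V → ℕ} :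
    ∀ {α : List V} {x : V → ℕ}, LegalSeq d x α →
      ∀ v, (runGame d x α v : ℤ) = (x v : ℤ) + lap d (fun u => (cnt α u : ℤ)) v := by
  intro α
  induction α with
  | nil => intro x _ v; simp [runGame, lap]
  | cons w rest ih =>
    intro x h v
    have h1 : outdeg d w ≤ x w := h.1
    have h2 := ih h.2 v
    show (runGame d (fire d x w) rest v : ℤ) = _
    rw [h2, fire_int h1 v]
    have : lap d (fun u => (cnt (w :: rest) u : ℤ)) v
        = lap d (fun u => (if u = w then (1:ℤ) else 0) + (cnt rest u : ℤ)) v := by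
      apply lap_congr
      intro u
      simp only [cnt_cons]
      push_cast
      split <;> simp
    rw [this, lap_add]
    ring

lemma legalSeq_append {d : V → V → ℕ} :
    ∀ {α β : List V} {x : V → ℕ},
      LegalSeq d x (α ++ β) ↔ LegalSeq d x α ∧ LegalSeq d (runGame d x α) β := by
  intro α
  induction α with
  | nil => intro β x; simp [LegalSeq, runGame]
  | cons v rest ih =>
    intro β x
    show (outdeg d v ≤ x v ∧ LegalSeq d (fire d x v) (rest ++ β)) ↔ _
    rw [ih]
    show _ ↔ ((outdeg d v ≤ x v ∧ LegalSeq d (fire d x v) rest) ∧ _)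
    have : runGame d x (v :: rest) = runGame d (fire d x v) rest := rfl
    rw [this, and_assoc]

lemma runGame_append (d : V → V → ℕ) :
    ∀ (α β : List V) (x : V → ℕ), runGame d x (α ++ β) = runGame d (runGame d x α) β := by
  intro α
  induction α with
  | nil => intro β x; rfl
  | cons v rest ih => intro β x; exact ih β (fire d x v)

lemma reaches_trans {d : V → V → ℕ} {x y z : V → ℕ}
    (h1 : Reaches d x y) (h2 : Reaches d y z) : Reaches d x z := by
  obtain ⟨α, ha, ha'⟩ := h1
  obtain ⟨β, hb, hb'⟩ := h2
  exact ⟨α ++ β, legalSeq_append.mpr ⟨ha, ha' ▸ hb⟩,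
    by rw [runGame_append, ha']; exact hb'⟩

lemma legalSeq_mono {d : V → V → ℕ} :
    ∀ {α : List V} {x z : V → ℕ}, LegalSeq d x α → (∀ v ∈ α, x v ≤ z v) → LegalSeq d z α := by
  intro α
  induction α with
  | nil => intro x z _ _; trivial
  | cons v rest ih =>
    intro x z h hxz
    refine ⟨le_trans h.1 (hxz v List.mem_cons_self), ?_⟩
    apply ih h.2
    intro u hu
    by_cases huv : u = v
    · subst huv
      rw [fire_self, fire_self]
      exact Nat.sub_le_sub_right (hxz u List.mem_cons_self) _
    · rw [fire_other huv, fire_other huv]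
      exact Nat.add_le_add_right (hxz u (List.mem_cons_of_mem _ hu)) _

lemma fire_comm {d : V → V → ℕ} {x : V → ℕ} {u v : V} (huv : u ≠ v)
    (hu : outdeg d u ≤ x u) (hv : outdeg d v ≤ x v) :
    fire d (fire d x u) v = fire d (fire d x v) u := by
  funext w
  by_cases hwv : w = v <;> by_cases hwu : w = u
  · exact absurd (hwu.symm.trans hwv) huv
  · subst hwv
    simp only [fire, eq_self_iff_true, if_true, if_neg huv.symm, if_neg hwu]
    omega
  · subst hwu
    simp only [fire, eq_self_iff_true, if_true, if_neg huv, if_neg hwv]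
    omega
  · simp only [fire, if_neg hwv, if_neg hwu]
    omega

lemma legal_front {d : V → V → ℕ} :
    ∀ {α : List V} {x : V → ℕ}, LegalSeq d x α → ∀ {u : V}, u ∈ α →
      outdeg d u ≤ x u → LegalSeq d x (u :: del u α) := by
  intro α
  induction α with
  | nil => intro x _ u hu; cases hu
  | cons w rest ih =>
    intro x h u hu hfire
    by_cases hwu : w = u
    · subst hwu
      show LegalSeq d x (w :: del w (w :: rest))
      have : del w (w :: rest) = rest := by simp [del]
      rw [this]; exact h
    · have hu' : u ∈ rest := by
        rcases List.mem_cons.mp hu with h' | h'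
        · exact absurd h'.symm hwu
        · exact h'
      have h1 : outdeg d w ≤ x w := h.1
      have huw : u ≠ w := fun hh => hwu hh.symm
      have hfire' : outdeg d u ≤ fire d x w u := by
        rw [fire_other huw]; omega
      have h2 := ih h.2 hu' hfire'
      have hlist : del u (w :: rest) = w :: del u rest := by simp [del, hwu]
      rw [hlist]
      refine ⟨hfire, ?_, ?_⟩
      · rw [fire_other hwu]; omega
      · rw [fire_comm huw hfire h1]
        exact h2.2

end Aux

section Aux2
variable {V : Type*} [Fintype V] [DecidableEq V]

lemma lap_row_sum {d : V → V → ℕ} (hloop : Loopless d) (heul : Eulerian d) (v : V) :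
    ∑ u, laplacian d v u = 0 := by
  have h1 : ∑ u, laplacian d v u
      = laplacian d v v + ∑ u ∈ Finset.univ.erase v, laplacian d v u :=
    (Finset.add_sum_erase _ _ (Finset.mem_univ v)).symm
  have h2 : ∑ u ∈ Finset.univ.erase v, laplacian d v u
      = ∑ u ∈ Finset.univ.erase v, (d u v : ℤ) := by
    apply Finset.sum_congr rfl
    intro u hu
    have : v ≠ u := fun h => (Finset.mem_erase.mp hu).1 h.symm
    simp [laplacian, this]
  have h3 : (indeg d v : ℤ) = ∑ u ∈ Finset.univ.erase v, (d u v : ℤ) := by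
    unfold indeg
    push_cast
    rw [← Finset.add_sum_erase _ _ (Finset.mem_univ v), hloop v]
    simp
  have h4 : laplacian d v v = -(outdeg d v : ℤ) := by simp [laplacian]
  rw [h1, h2, ← h3, h4, heul v]
  ring

lemma lap_nonpos {d : V → V → ℕ} (hloop : Loopless d) (heul : Eulerian d)
    {g : V → ℤ} (hg0 : ∀ u, 0 ≤ g u) {v : V} (hgv : ∀ u, g u ≤ g v) :
    lap d g v ≤ 0 := by
  have hterm : ∀ u, laplacian d v u * g u ≤ laplacian d v u * g v := by
    intro u
    by_cases huv : v = u
    · subst huv; exact le_refl _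
    · have hpos : (0:ℤ) ≤ laplacian d v u := by simp [laplacian, huv]
      exact mul_le_mul_of_nonneg_left (hgv u) hpos
  calc lap d g v ≤ ∑ u, laplacian d v u * g v :=
        Finset.sum_le_sum (fun u _ => hterm u)
    _ = (∑ u, laplacian d v u) * g v := by rw [Finset.sum_mul]
    _ = 0 := by rw [lap_row_sum hloop heul]; ring

lemma exists_fireable {d : V → V → ℕ} (hloop : Loopless d) (heul : Eulerian d)
    {z0 : V → ℕ} {s : ℕ} {A : Finset V} :
    ∀ {γ : List V} {z : V → ℕ} {m : V → ℕ},
      LegalSeq d z γ →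
      (∀ v, (z v : ℤ) = (z0 v : ℤ) + lap d (fun u => (m u : ℤ)) v) →
      (∀ v, m v < s) →
      (∀ w, w ∉ A → m w + cnt γ w < s) →
      (∃ u ∈ A, s ≤ m u + cnt γ u) →
      ∃ u ∈ A, outdeg d u ≤ z0 u := by
  intro γ
  induction γ with
  | nil =>
    intro z m _ _ hmlt _ hbig
    obtain ⟨u, _, hu⟩ := hbig
    have := hmlt u
    simp only [cnt_nil] at hu
    omega
  | cons w rest ih =>
    intro z m hleg hz hmlt hcap hbig
    by_cases hw : w ∈ A ∧ m w + 1 = s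
    · refine ⟨w, hw.1, ?_⟩
      have h1 : outdeg d w ≤ z w := hleg.1
      have h2 : lap d (fun u => (m u : ℤ)) w ≤ 0 := by
        apply lap_nonpos hloop heul
        · intro u; positivity
        · intro u
          have := hmlt u
          have := hw.2
          push_cast
          omega
      have h3 := hz w
      have : (outdeg d w : ℤ) ≤ (z0 w : ℤ) := by omega
      exact_mod_cast this
    · apply ih (hleg.2) (z := fire d z w) (m := fun u => m u + if u = w then 1 else 0)
      · intro v
        rw [fire_int hleg.1 v, hz v]
        have : lap d (fun u => ((m u + if u = w then 1 else 0 : ℕ) : ℤ)) v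
            = lap d (fun u => (m u : ℤ) + (if u = w then (1:ℤ) else 0)) v := by
          apply lap_congr; intro u; push_cast; split <;> simp
        rw [this, lap_add]
        ring
      · intro v
        by_cases hvw : v = w
        · rw [if_pos hvw, hvw]
          by_cases hvA : w ∈ A
          · have h5 : m w + 1 ≠ s := fun h => hw ⟨hvA, h⟩
            have h6 := hmlt w
            omega
          · have h7 := hcap w hvA
            simp only [cnt_cons, eq_self_iff_true, if_true] at h7
            omega
        · rw [if_neg hvw]
          have := hmlt v
          omega
      · intro u hu
        have h7 := hcap u hu
        simp only [cnt_cons] at h7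
        omega
      · obtain ⟨u, huA, hb⟩ := hbig
        refine ⟨u, huA, ?_⟩
        simp only [cnt_cons] at hb
        omega

lemma extract_layer {d : V → V → ℕ} (hloop : Loopless d) (heul : Eulerian d) {s : ℕ}
    (hs : 1 ≤ s) :
    ∀ (n : ℕ) (A : Finset V), A.card = n → ∀ {x : V → ℕ} {γ : List V},
      LegalSeq d x γ → (∀ u ∈ A, cnt γ u = s) → (∀ w, w ∉ A → cnt γ w < s) →
      ∃ σ β : List V, LegalSeq d x (σ ++ β) ∧ (∀ v, cnt (σ ++ β) v = cnt γ v) ∧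
        (∀ v, cnt σ v = if v ∈ A then 1 else 0) := by
  intro n
  induction n with
  | zero =>
    intro A hcard x γ hleg hA hout
    have hAe : A = ∅ := Finset.card_eq_zero.mp hcard
    subst hAe
    exact ⟨[], γ, hleg, fun v => rfl, fun v => by simp⟩
  | succ n ih =>
    intro A hcard x γ hleg hA hout
    have hne : A.Nonempty := Finset.card_pos.mp (by omega)
    obtain ⟨u, huA, hufire⟩ := exists_fireable hloop heul (z0 := x) (s := s) (A := A)
      (γ := γ) (z := x) (m := fun _ => 0) hleg
      (fun v => by simp) (fun v => hs) (fun w hw => by simpa using hout w hw)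
      ⟨hne.choose, hne.choose_spec, by simp [hA _ hne.choose_spec]⟩
    have humem : u ∈ γ := mem_of_cnt_pos (by rw [hA u huA]; omega)
    have hfront := legal_front hleg humem hufire
    have hdel := cnt_del u γ humem
    obtain ⟨σ', β', hl', hc', hσ'⟩ := ih (A.erase u)
      (by rw [Finset.card_erase_of_mem huA, hcard]; rfl)
      (x := fire d x u) (γ := del u γ) hfront.2
      (by
        intro w hw
        obtain ⟨hwu, hwA⟩ := Finset.mem_erase.mp hw
        have h1 := hdel w
        rw [if_neg hwu] at h1
        have h2 := hA w hwA
        omega)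
      (by
        intro w hw
        by_cases hwu : w = u
        · have h1 := hdel w
          rw [if_pos hwu] at h1
          rw [hwu] at h1 ⊢
          have h2 := hA u huA
          omega
        · have hwA : w ∉ A := fun h => hw (Finset.mem_erase.mpr ⟨hwu, h⟩)
          have h1 := hdel w
          rw [if_neg hwu] at h1
          have h2 := hout w hwA
          omega)
    refine ⟨u :: σ', β', ?_, ?_, ?_⟩
    · show LegalSeq d x (u :: (σ' ++ β'))
      exact ⟨hufire, hl'⟩
    · intro v
      show (if v = u then 1 else 0) + cnt (σ' ++ β') v = cnt γ v
      rw [hc' v]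
      have := hdel v
      omega
    · intro v
      show (if v = u then 1 else 0) + cnt σ' v = if v ∈ A then 1 else 0
      rw [hσ' v]
      by_cases hvu : v = u
      · subst hvu
        simp [huA]
      · simp [hvu, Finset.mem_erase]

lemma strong_of_weak {d : V → V → ℕ} (hconn : WeaklyConnected d) (heul : Eulerian d) :
    StronglyConnected d := by
  classical
  have key : ∀ a b, d a b ≠ 0 → Relation.ReflTransGen (fun p q => d p q ≠ 0) b a := by
    intro a b hab
    by_contra hnot
    set R : Finset V := Finset.univ.filter
      (fun w => Relation.ReflTransGen (fun p q => d p q ≠ 0) b w) with hRdef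
    have hbR : b ∈ R := by
      simp only [hRdef, Finset.mem_filter, Finset.mem_univ, true_and]
      exact Relation.ReflTransGen.refl
    have hclosed : ∀ v ∈ R, ∀ u, d v u ≠ 0 → u ∈ R := by
      intro v hv u hvu
      simp only [hRdef, Finset.mem_filter, Finset.mem_univ, true_and] at hv ⊢
      exact hv.tail hvu
    have haR : a ∉ R := by
      simp only [hRdef, Finset.mem_filter, Finset.mem_univ, true_and]
      exact hnot
    have h0 : ∀ v ∈ R, ∀ u ∈ Rᶜ, d v u = 0 := by
      intro v hv u hu
      by_contra h
      exact (Finset.mem_compl.mp hu) (hclosed v hv u h)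
    have e1 : ∑ v ∈ R, outdeg d v = ∑ v ∈ R, ∑ u ∈ R, d v u := by
      apply Finset.sum_congr rfl
      intro v hv
      unfold outdeg
      rw [← Finset.sum_add_sum_compl R (fun u => d v u)]
      have : ∑ u ∈ Rᶜ, d v u = 0 := Finset.sum_eq_zero (h0 v hv)
      omega
    have e2 : ∑ v ∈ R, indeg d v
        = ∑ v ∈ R, ∑ u ∈ R, d u v + ∑ v ∈ R, ∑ u ∈ Rᶜ, d u v := by
      rw [← Finset.sum_add_distrib]
      apply Finset.sum_congr rfl
      intro v _
      unfold indeg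
      rw [← Finset.sum_add_sum_compl R (fun u => d u v)]
    have e3 : ∑ v ∈ R, ∑ u ∈ R, d v u = ∑ v ∈ R, ∑ u ∈ R, d u v := Finset.sum_comm
    have e4 : ∑ v ∈ R, ∑ u ∈ Rᶜ, d u v = 0 := by
      have e5 : ∑ v ∈ R, outdeg d v = ∑ v ∈ R, indeg d v :=
        Finset.sum_congr rfl (fun v _ => heul v)
      omega
    have e6 : ∑ u ∈ Rᶜ, d u b = 0 := by
      have := (Finset.sum_eq_zero_iff).mp e4 b hbR
      exact this
    have : d a b = 0 :=
      (Finset.sum_eq_zero_iff).mp e6 a (Finset.mem_compl.mpr haR)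
    exact hab this
  intro u v
  induction hconn u v with
  | refl => exact Relation.ReflTransGen.refl
  | tail _ hstep ih =>
    rcases hstep with h | h
    · exact ih.tail h
    · exact ih.trans (key _ _ h)

lemma ker_const {d : V → V → ℕ} [Nonempty V] (hloop : Loopless d) (heul : Eulerian d)
    (hsc : StronglyConnected d) {g : V → ℤ} (hg : ∀ v, lap d g v = 0) (a b : V) :
    g a = g b := by
  obtain ⟨vM, -, hmax⟩ := Finset.exists_max_image Finset.univ g Finset.univ_nonempty
  have hmax' : ∀ u, g u ≤ g vM := fun u => hmax u (Finset.mem_univ u)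
  have step : ∀ p q, d p q ≠ 0 → g q = g vM → g p = g vM := by
    intro p q hpq hq
    by_contra hp
    have hlt : g p < g vM := lt_of_le_of_ne (hmax' p) hp
    have hpq' : p ≠ q := by
      intro h; subst h; exact hpq (hloop p)
    have hterm : ∀ u ∈ Finset.univ, laplacian d q u * g u ≤ laplacian d q u * g vM := by
      intro u _
      by_cases h : q = u
      · subst h; rw [hq]
      · have hpos : (0:ℤ) ≤ laplacian d q u := by simp [laplacian, h]
        exact mul_le_mul_of_nonneg_left (hmax' u) hpos
    have hstrict : laplacian d q p * g p < laplacian d q p * g vM := by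
      have hpos : (0:ℤ) < laplacian d q p := by
        have : laplacian d q p = (d p q : ℤ) := by simp [laplacian, Ne.symm hpq']
        rw [this]
        exact_mod_cast Nat.pos_of_ne_zero hpq
      exact mul_lt_mul_of_pos_left hlt hpos
    have hlt2 : lap d g q < ∑ u, laplacian d q u * g vM :=
      Finset.sum_lt_sum hterm ⟨p, Finset.mem_univ p, hstrict⟩
    rw [hg q, ← Finset.sum_mul, lap_row_sum hloop heul q, zero_mul] at hlt2
    exact lt_irrefl 0 hlt2
  have main : ∀ w, g w = g vM := by
    intro w
    induction hsc w vM using Relation.ReflTransGen.head_induction_on with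
    | refl => rfl
    | head h _ ih => exact step _ _ h ih
  rw [main a, main b]

end Aux2

/-- Correctness of the Eulerian reachability algorithm. Let `G` be a
connected Eulerian digraph, `f ∈ ℕ^V` nonzero with `y = x + Lf` and `min f = 0`, let
`t = max f`, `S j = {v : f v ≥ t - j + 1}` for `1 ≤ j ≤ t`, and
`xs j = x + L·∑_{ℓ=1}^{j-1} 1_{S ℓ}`. Then `x ⤳ y` iff for every `j ∈ {1, …, t}` which is
the last occurrence of a distinct set in the chain `S_1 ⊆ … ⊆ S_t` (i.e. `j = t` or
`S j ≠ S (j+1)`), the vector `xs j` is a nonnegative chip-distribution and there is a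
legal game from `xs j` to `xs (j+1)`. -/
theorem eulerian_reachability_criterion {V : Type*} [Fintype V] [DecidableEq V]
    (d : V → V → ℕ) (hloop : Loopless d) (hconn : WeaklyConnected d) (heul : Eulerian d)
    (x y f : V → ℕ) (hf : f ≠ 0) (hmin : ∃ v, f v = 0)
    (hy : ∀ v, (y v : ℤ) = (x v : ℤ) + (laplacian d).mulVec (fun u => (f u : ℤ)) v)
    (t : ℕ) (ht : t = Finset.univ.sup f)
    (S : ℕ → Finset V) (hS : ∀ j, S j = Finset.univ.filter (fun v => t + 1 - j ≤ f v))
    (xs : ℕ → V → ℤ)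
    (hxs : ∀ j v, xs j v = (x v : ℤ) + (laplacian d).mulVec
        (fun u => ∑ ℓ ∈ Finset.Icc 1 (j - 1), (if u ∈ S ℓ then (1 : ℤ) else 0)) v) :
    Reaches d x y ↔
      ∀ j ∈ Finset.Icc 1 t, (j = t ∨ S j ≠ S (j + 1)) →
        (∀ v, 0 ≤ xs j v) ∧
        ∃ xj xj1 : V → ℕ, (∀ v, (xj v : ℤ) = xs j v) ∧ (∀ v, (xj1 v : ℤ) = xs (j + 1) v) ∧
          Reaches d xj xj1 := by
  classical
  obtain ⟨v0, hv0⟩ := hmin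
  haveI : Nonempty V := ⟨v0⟩
  have hsc : StronglyConnected d := strong_of_weak hconn heul
  have hfle : ∀ v, f v ≤ t := fun v => ht ▸ Finset.le_sup (Finset.mem_univ v)
  have ht1 : 1 ≤ t := by
    obtain ⟨v, hv⟩ := Function.ne_iff.mp hf
    have h1 : f v ≤ t := hfle v
    have h2 : f v ≠ 0 := by simpa using hv
    omega
  have hSmem : ∀ j v, v ∈ S j ↔ t + 1 - j ≤ f v := by
    intro j v; rw [hS]; simp
  have hv0S : ∀ j, j ≤ t → v0 ∉ S j := by
    intro j hj h
    rw [hSmem] at h; omega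
  have hxs' : ∀ j v, xs j v = (x v : ℤ)
      + lap d (fun u => ∑ ℓ ∈ Finset.Icc 1 (j - 1), if u ∈ S ℓ then (1:ℤ) else 0) v :=
    fun j v => hxs j v
  have hy' : ∀ v, (y v : ℤ) = (x v : ℤ) + lap d (fun u => (f u : ℤ)) v := fun v => hy v
  have hxs_step : ∀ j, 1 ≤ j → ∀ v,
      xs (j+1) v = xs j v + lap d (fun u => if u ∈ S j then (1:ℤ) else 0) v := by
    intro j hj v
    obtain ⟨i, rfl⟩ : ∃ i, j = i + 1 := ⟨j - 1, by omega⟩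
    rw [hxs' (i+1+1) v, hxs' (i+1) v]
    have h1 : (i+1+1) - 1 = (i+1) := rfl
    have h2 : (i+1) - 1 = i := rfl
    rw [h1, h2]
    have hsplit : ∀ u : V, (∑ ℓ ∈ Finset.Icc 1 (i+1), if u ∈ S ℓ then (1:ℤ) else 0)
        = (∑ ℓ ∈ Finset.Icc 1 i, if u ∈ S ℓ then (1:ℤ) else 0)
          + (if u ∈ S (i+1) then (1:ℤ) else 0) := by
      intro u
      exact Finset.sum_Icc_succ_top (by omega) _
    rw [lap_congr d hsplit v, lap_add]
    ring
  have hxs_one : ∀ v, xs 1 v = (x v : ℤ) := by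
    intro v
    rw [hxs' 1 v]
    have he : Finset.Icc 1 ((1:ℕ) - 1) = ∅ := by
      apply Finset.Icc_eq_empty; omega
    rw [he]
    simp [lap]
  have layer_partialZ : ∀ (p : ℕ) (u : V),
      (∑ ℓ ∈ Finset.Icc 1 p, if u ∈ S ℓ then (1:ℤ) else 0)
        = ((p + 1 - (t + 1 - f u) : ℕ) : ℤ) := by
    intro p u
    rw [Finset.sum_boole]
    have hfilter : (Finset.Icc 1 p).filter (fun ℓ => u ∈ S ℓ)
        = Finset.Icc (t + 1 - f u) p := by
      ext ℓ
      simp only [Finset.mem_filter, Finset.mem_Icc, hSmem]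
      have := hfle u
      omega
    rw [hfilter, Nat.card_Icc]
  have hxs_top : ∀ v, xs (t+1) v = (y v : ℤ) := by
    intro v
    rw [hxs' (t+1) v, hy' v]
    have heq : ∀ u, (∑ ℓ ∈ Finset.Icc 1 ((t+1) - 1), if u ∈ S ℓ then (1:ℤ) else 0)
        = (f u : ℤ) := by
      intro u
      have h1 : (t+1) - 1 = t := rfl
      rw [h1, layer_partialZ t u]
      have h2 := hfle u
      have h3 : t + 1 - (t + 1 - f u) = f u := by omega
      rw [h3]
    rw [lap_congr d heq v]
  constructor
  · rintro ⟨α, hlegα, hrunα⟩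
    have hyint : ∀ v, (y v : ℤ) = (x v : ℤ) + lap d (fun u => (cnt α u : ℤ)) v := by
      intro v
      rw [← hrunα]
      exact runGame_int hlegα v
    have hck : ∀ v, (cnt α v : ℤ) = (f v : ℤ) + (cnt α v0 : ℤ) := by
      have hg : ∀ v, lap d (fun u => (cnt α u : ℤ) - (f u : ℤ)) v = 0 := by
        intro v
        have hsub := lap_sub d (fun u => (cnt α u : ℤ)) (fun u => (f u : ℤ)) v
        rw [hsub]
        have h1 := hyint v
        have h2 := hy' v
        omega
      intro v
      have h := ker_const hloop heul hsc hg v v0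
      rw [hv0] at h
      push_cast at h ⊢
      omega
    set k : ℕ := cnt α v0 with hkdef
    have hstep : ∀ i, 1 ≤ i → i ≤ t → ∀ (xi : V → ℕ) (γ : List V),
        (∀ v, (xi v : ℤ) = xs i v) → LegalSeq d xi γ →
        (∀ v, (cnt γ v : ℤ) + (∑ ℓ ∈ Finset.Icc 1 (i-1), if v ∈ S ℓ then (1:ℤ) else 0)
            = (f v : ℤ) + (k : ℤ)) →
        ∃ (xi1 : V → ℕ) (β : List V),
          (∀ v, (xi1 v : ℤ) = xs (i+1) v) ∧ Reaches d xi xi1 ∧ LegalSeq d xi1 β ∧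
          (∀ v, (cnt β v : ℤ) + (∑ ℓ ∈ Finset.Icc 1 i, if v ∈ S ℓ then (1:ℤ) else 0)
              = (f v : ℤ) + (k : ℤ)) := by
      intro i hi1 hit xi γ hxi hlegγ hinv
      have hin : ∀ u ∈ S i, cnt γ u = t + k + 1 - i := by
        intro u hu
        have h1 := hinv u
        rw [layer_partialZ (i-1) u] at h1
        have h2 := hfle u
        have h3 := (hSmem i u).mp hu
        omega
      have hout : ∀ w, w ∉ S i → cnt γ w < t + k + 1 - i := by
        intro w hw
        have h1 := hinv w
        rw [layer_partialZ (i-1) w] at h1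
        have h2 := hfle w
        have h4 : ¬ (t + 1 - i ≤ f w) := fun h => hw ((hSmem i w).mpr h)
        omega
      obtain ⟨σ, β, hlegσβ, hcnteq, hσ⟩ := extract_layer hloop heul
        (s := t + k + 1 - i) (by omega) (S i).card (S i) rfl hlegγ hin hout
      have hlegσ : LegalSeq d xi σ := (legalSeq_append.mp hlegσβ).1
      refine ⟨runGame d xi σ, β, ?_, ⟨σ, hlegσ, rfl⟩, (legalSeq_append.mp hlegσβ).2, ?_⟩
      · intro v
        rw [runGame_int hlegσ v, hxi v, hxs_step i hi1 v]
        have heq : ∀ u, ((cnt σ u : ℕ) : ℤ) = (if u ∈ S i then (1:ℤ) else 0) := by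
          intro u; rw [hσ u]; split <;> simp
        rw [lap_congr d heq v]
      · intro v
        have h1 := hinv v
        have h2 : cnt σ v + cnt β v = cnt γ v := by rw [← cnt_append, hcnteq]
        have h3 := hσ v
        have hsplit : (∑ ℓ ∈ Finset.Icc 1 i, if v ∈ S ℓ then (1:ℤ) else 0)
            = (∑ ℓ ∈ Finset.Icc 1 (i-1), if v ∈ S ℓ then (1:ℤ) else 0)
              + (if v ∈ S i then (1:ℤ) else 0) := by
          obtain ⟨i', rfl⟩ : ∃ i', i = i' + 1 := ⟨i - 1, by omega⟩
          have h4 : (i' + 1) - 1 = i' := rfl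
          rw [h4]
          exact Finset.sum_Icc_succ_top (by omega) _
        rw [hsplit]
        by_cases hv : v ∈ S i
        · rw [if_pos hv] at h3 ⊢; omega
        · rw [if_neg hv] at h3 ⊢; omega
    have hmain : ∀ i, 1 ≤ i → i ≤ t + 1 → ∃ (xi : V → ℕ) (γ : List V),
        (∀ v, (xi v : ℤ) = xs i v) ∧ LegalSeq d xi γ ∧
        (∀ v, (cnt γ v : ℤ) + (∑ ℓ ∈ Finset.Icc 1 (i-1), if v ∈ S ℓ then (1:ℤ) else 0)
            = (f v : ℤ) + (k : ℤ)) := by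
      intro i hi1
      induction i, hi1 using Nat.le_induction with
      | base =>
        intro _
        refine ⟨x, α, fun v => (hxs_one v).symm, hlegα, ?_⟩
        intro v
        have he : Finset.Icc 1 ((1:ℕ) - 1) = ∅ := by
          apply Finset.Icc_eq_empty; omega
        rw [he]
        simp only [Finset.sum_empty, add_zero]
        exact hck v
      | succ i hi ih =>
        intro hit
        obtain ⟨xi, γ, hxi, hlegγ, hinv⟩ := ih (by omega)
        obtain ⟨xi1, β, hxi1, _, hlegβ, hinv1⟩ := hstep i hi (by omega) xi γ hxi hlegγ hinv
        refine ⟨xi1, β, hxi1, hlegβ, ?_⟩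
        have h5 : (i + 1) - 1 = i := rfl
        rw [h5]
        exact hinv1
    intro j hj hmark
    rw [Finset.mem_Icc] at hj
    obtain ⟨xj, γ, hxj, hlegγ, hinv⟩ := hmain j hj.1 (by omega)
    obtain ⟨xj1, β, hxj1, hreach, -, -⟩ := hstep j hj.1 hj.2 xj γ hxj hlegγ hinv
    exact ⟨fun v => by rw [← hxj v]; exact Int.natCast_nonneg _, xj, xj1, hxj, hxj1, hreach⟩
  · intro hyp
    have hstep_mark : ∀ j, 1 ≤ j → j ≤ t → (j = t ∨ S j ≠ S (j+1)) →
        ∃ σ : List V, (∀ v, cnt σ v = if v ∈ S j then 1 else 0) ∧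
          ∀ z : V → ℕ, (∀ v ∈ S j, xs j v ≤ (z v : ℤ)) → LegalSeq d z σ := by
      intro j hj1 hjt hmark
      obtain ⟨hnn, xj, xj1, hxj, hxj1, hre⟩ := hyp j (Finset.mem_Icc.mpr ⟨hj1, hjt⟩) hmark
      obtain ⟨γ, hlegγ, hrunγ⟩ := hre
      have hgz : ∀ v, lap d (fun u => (cnt γ u : ℤ) - (if u ∈ S j then (1:ℤ) else 0)) v = 0 := by
        intro v
        have hsub := lap_sub d (fun u => (cnt γ u : ℤ)) (fun u => if u ∈ S j then (1:ℤ) else 0) v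
        rw [hsub]
        have h1 : (xj1 v : ℤ) = (xj v : ℤ) + lap d (fun u => (cnt γ u : ℤ)) v := by
          rw [← hrunγ]; exact runGame_int hlegγ v
        have h2 := hxs_step j hj1 v
        have h3 := hxj v
        have h4 := hxj1 v
        omega
      have hkc : ∀ v, (cnt γ v : ℤ) - (if v ∈ S j then (1:ℤ) else 0) = (cnt γ v0 : ℤ) := by
        intro v
        have h := ker_const hloop heul hsc hgz v v0
        rw [if_neg (hv0S j hjt)] at h
        omega
      have hin : ∀ u ∈ S j, cnt γ u = cnt γ v0 + 1 := by
        intro u hu; have h := hkc u; rw [if_pos hu] at h; omega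
      have hout2 : ∀ w, w ∉ S j → cnt γ w < cnt γ v0 + 1 := by
        intro w hw; have h := hkc w; rw [if_neg hw] at h; omega
      obtain ⟨σ, β, hlegσβ, -, hσ⟩ := extract_layer hloop heul (s := cnt γ v0 + 1) (by omega)
        (S j).card (S j) rfl hlegγ hin hout2
      have hlegσ : LegalSeq d xj σ := (legalSeq_append.mp hlegσβ).1
      refine ⟨σ, hσ, ?_⟩
      intro z hz
      apply legalSeq_mono hlegσ
      intro v hv
      have hvS : v ∈ S j := by
        have h1 := cnt_pos_of_mem hv
        have h2 := hσ v
        by_contra h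
        rw [if_neg h] at h2
        omega
      have h3 := hz v hvS
      have h4 := hxj v
      omega
    have hD : ∀ n j, 1 ≤ j → j ≤ t → t - j ≤ n →
        ∃ σ : List V, (∀ v, cnt σ v = if v ∈ S j then 1 else 0) ∧
          ∀ z : V → ℕ, (∀ v ∈ S j, xs j v ≤ (z v : ℤ)) → LegalSeq d z σ := by
      intro n
      induction n with
      | zero =>
        intro j hj1 hjt hn
        exact hstep_mark j hj1 hjt (Or.inl (by omega))
      | succ n ih =>
        intro j hj1 hjt hn
        by_cases hmark : j = t ∨ S j ≠ S (j+1)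
        · exact hstep_mark j hj1 hjt hmark
        · push_neg at hmark
          obtain ⟨hjt', hSS⟩ := hmark
          obtain ⟨σ, hσ, htr⟩ := ih (j+1) (by omega) (by omega) (by omega)
          refine ⟨σ, ?_, ?_⟩
          · intro v; rw [hσ v, ← hSS]
          · intro z hz
            apply htr
            intro v hv
            rw [← hSS] at hv
            have h1 := hz v hv
            have h2 : xs (j+1) v ≤ xs j v := by
              rw [hxs_step j hj1 v]
              have h3 : lap d (fun u => if u ∈ S j then (1:ℤ) else 0) v ≤ 0 := by
                apply lap_nonpos hloop heul
                · intro u; split <;> omega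
                · intro u
                  rw [if_pos hv]
                  split <;> omega
              omega
            omega
    have hU : ∀ i, 1 ≤ i → i ≤ t + 1 →
        ∃ xi : V → ℕ, (∀ v, (xi v : ℤ) = xs i v) ∧ Reaches d x xi := by
      intro i hi1
      induction i, hi1 using Nat.le_induction with
      | base =>
        intro _
        exact ⟨x, fun v => (hxs_one v).symm, ⟨[], trivial, rfl⟩⟩
      | succ i hi ih =>
        intro hit
        obtain ⟨xi, hxi, hreach⟩ := ih (by omega)
        obtain ⟨σ, hσ, htr⟩ := hD (t - i) i hi (by omega) (le_refl _)
        have hlegσ : LegalSeq d xi σ := htr xi (fun v _ => le_of_eq (hxi v).symm)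
        refine ⟨runGame d xi σ, ?_, reaches_trans hreach ⟨σ, hlegσ, rfl⟩⟩
        intro v
        rw [runGame_int hlegσ v, hxi v, hxs_step i hi v]
        have heq : ∀ u, ((cnt σ u : ℕ) : ℤ) = (if u ∈ S i then (1:ℤ) else 0) := by
          intro u; rw [hσ u]; split <;> simp
        rw [lap_congr d heq v]
    obtain ⟨xT, hxT, hreach⟩ := hU (t+1) (by omega) (le_refl _)
    have hxTy : xT = y := by
      funext v
      have h1 := hxT v
      rw [hxs_top v] at h1
      exact_mod_cast h1
    rw [← hxTy]
    exact hreach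


end ChipFiring
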